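/- Let p be a prime and P > 1 a finite p-group acting on a finite vector space V with C_V(P) = 0. Let σ be an automorphism of V of order p commuting with the P-action such that v^σ ∈ ⟨v⟩ for every v ∈ V. Then there exist g ∈ P and a nonzero v ∈ V with v^σ = v^g and such that the index |P : C_P(v)| is minimal among the indices |P : C_P(w)| over all nonzero w ∈ V. -/

import Mathlib

open Finset

/-- An additive automorphism sending each vector into its cyclic subgroup is a global scalar. -/
theorem sigma_is_scalar {F : Type*} [Field F] [Finite F] {V : Type*} [AddCommGroup V]
    [Module F V] (σ : V ≃+ V) (hcyc : ∀ v : V, σ v ∈ AddSubgroup.zmultiples v) :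
    ∃ κ : F, ∀ v : V, σ v = κ • v := by
  by_cases hV : Subsingleton V
  · exact ⟨1, fun v => Subsingleton.elim _ _⟩
  rw [not_subsingleton_iff_nontrivial] at hV
  haveI := Fintype.ofFinite F
  set q0 := ringChar F with hq0def
  haveI : CharP F q0 := ringChar.charP F
  have hq0 : q0.Prime := CharP.char_is_prime F q0
  haveI := Fact.mk hq0
  have h : ∀ v : V, ∃ n : ℤ, n • v = σ v := fun v => (AddSubgroup.mem_zmultiples_iff).1 (hcyc v)
  choose n hn using h
  have hzero : ∀ (v : V), v ≠ 0 → ∀ m : ℤ, (m • v = 0 ↔ (q0 : ℤ) ∣ m) := by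
    intro v hv m
    rw [← Int.cast_smul_eq_zsmul F, smul_eq_zero, ← CharP.intCast_eq_zero_iff F q0]
    simp [hv]
  have key : ∀ v w : V, v ≠ 0 → w ≠ 0 → (q0 : ℤ) ∣ n v - n w := by
    intro v w hv hw
    by_cases h1 : ∃ c : ℤ, w = c • v
    · obtain ⟨c, rfl⟩ := h1
      have h2 : σ (c • v) = (n v) • (c • v) := by
        rw [map_zsmul, ← hn v, smul_comm]
      have h3 : (n v - n (c • v)) • (c • v) = 0 := by
        rw [sub_smul, hn (c • v), h2, sub_self]
      exact (hzero _ hw _).1 h3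
    by_cases h2 : ∃ c : ℤ, v = c • w
    · obtain ⟨c, rfl⟩ := h2
      have h3 : σ (c • w) = (n w) • (c • w) := by
        rw [map_zsmul, ← hn w, smul_comm]
      have h4 : (n w - n (c • w)) • (c • w) = 0 := by
        rw [sub_smul, hn (c • w), h3, sub_self]
      have h5 := (hzero _ hv _).1 h4
      rw [show n (c • w) - n w = -(n w - n (c • w)) by ring]
      exact dvd_neg.2 h5
    · set a := n (v + w) with ha
      have he : (a - n v) • v = (n w - a) • w := by
        have h5 : a • v + a • w = n v • v + n w • w := by
          rw [← smul_add, hn (v + w), map_add, ← hn v, ← hn w]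
        rw [sub_smul, sub_smul, sub_eq_sub_iff_add_eq_add, h5]
        abel
      have hwa : (q0 : ℤ) ∣ n w - a := by
        by_contra hnd
        have hc0 : ((n w - a : ℤ) : ZMod q0) ≠ 0 := by
          rwa [Ne, ZMod.intCast_zmod_eq_zero_iff_dvd]
        set c : ZMod q0 := ((n w - a : ℤ) : ZMod q0) with hc
        set d : ℤ := ((c⁻¹ : ZMod q0).val : ℤ) with hd
        have hdc : ((d : ℤ) : ZMod q0) = c⁻¹ := by
          rw [hd]
          push_cast
          simp [ZMod.natCast_val, ZMod.cast_id]
        have hdvd : (q0 : ℤ) ∣ d * (n w - a) - 1 := by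
          rw [← ZMod.intCast_zmod_eq_zero_iff_dvd, Int.cast_sub, Int.cast_mul, Int.cast_one,
            hdc, ← hc, inv_mul_cancel₀ hc0, sub_self]
        have h3 : w = (d * (n w - a)) • w := by
          have h0 : (d * (n w - a) - 1) • w = 0 := (hzero w hw _).2 hdvd
          rw [sub_smul, one_smul, sub_eq_zero] at h0
          exact h0.symm
        apply h1
        refine ⟨d * (a - n v), ?_⟩
        rw [h3, mul_smul, mul_smul, ← he]
      have h4 : (n w - a) • w = 0 := (hzero w hw _).2 hwa
      have h5 : (q0 : ℤ) ∣ a - n v := (hzero v hv _).1 (by rw [he, h4])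
      rw [show n v - n w = -((a - n v) + (n w - a)) by ring]
      exact dvd_neg.2 (dvd_add h5 hwa)
  obtain ⟨v0, hv0⟩ := exists_ne (0 : V)
  refine ⟨((n v0 : ℤ) : F), fun v => ?_⟩
  by_cases hv : v = 0
  · simp [hv]
  have h0 : (n v - n v0) • v = 0 := (hzero v hv _).2 (key v v0 hv hv0)
  rw [sub_smul, sub_eq_zero] at h0
  rw [← hn v, Int.cast_smul_eq_zsmul, h0]


theorem core_induction {p : ℕ} (hp : p.Prime) {P : Type*} [Group P] [Finite P]
    (hP : IsPGroup p P)
    {F : Type*} [Field F] {V : Type*} [AddCommGroup V] [Module F V] [Finite V]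
    [DistribMulAction P V] [SMulCommClass P F V]
    (hfix : ∀ v : V, (∀ g : P, g • v = v) → v = 0)
    (κ : F) (hκp : κ ^ p = 1) (hκ1 : κ ≠ 1) :
    ∀ (n : ℕ) (W : Submodule F V), Nat.card W ≤ n →
      (∀ (g : P), ∀ w ∈ W, g • w ∈ W) → W ≠ ⊥ →
      ∃ (g : P) (v : V), v ∈ W ∧ v ≠ 0 ∧ κ • v = g • v ∧
        ∀ w ∈ W, w ≠ 0 →
          (MulAction.stabilizer P v).index ≤ (MulAction.stabilizer P w).index := by
  haveI := Fact.mk hp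
  -- basic facts about κ
  have hκ0 : κ ≠ 0 := by
    rintro rfl
    rw [zero_pow hp.ne_zero] at hκp
    exact zero_ne_one hκp
  have hpF : (p : F) ≠ 0 := by
    intro h0
    have hchar : ringChar F ∣ p := ringChar.dvd (by exact_mod_cast h0)
    have hne1 : ringChar F ≠ 1 := CharP.ringChar_ne_one
    have hrp : ringChar F = p := (hp.eq_one_or_self_of_dvd _ hchar).resolve_left hne1
    haveI : CharP F p := hrp ▸ ringChar.charP F
    have : (κ - 1) ^ p = 0 := by rw [sub_pow_char, hκp, one_pow, sub_self]
    exact hκ1 (sub_eq_zero.1 ((pow_eq_zero_iff hp.ne_zero).1 this))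
  have hκord : orderOf κ = p := orderOf_eq_prime hκp hκ1
  have hκj : ∀ j : ℕ, ¬ (p ∣ j) → κ ^ j ≠ 1 := by
    intro j hj hone
    exact hj (hκord ▸ orderOf_dvd_of_pow_eq_one hone)
  have hgeom : ∀ x : F, x ^ p = 1 → x ≠ 1 → ∑ j ∈ range p, x ^ j = 0 := by
    intro x hxp hx1
    rw [geom_sum_eq hx1, hxp, sub_self, zero_div]
  intro n
  induction n with
  | zero =>
    intro W hcard _ _
    have : 0 < Nat.card W := Nat.card_pos
    omega
  | succ n ih =>
    intro W hcard hinv hbot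
    -- the linear action restricted to W
    have hrestr : ∀ g : P, ∀ x ∈ W, (DistribMulAction.toLinearMap F V g) x ∈ W :=
      fun g x hx => hinv g x hx
    set T : P → Module.End F ↥W :=
      fun g => (DistribMulAction.toLinearMap F V g).restrict (hrestr g) with hTdef
    have hT : ∀ (g : P) (x : ↥W), ((T g x : V)) = g • (x : V) := fun _ _ => rfl
    have hT_mul : ∀ g h : P, T (g * h) = T g * T h := by
      intro g h
      ext x
      show (((g * h) • (x:V) : V)) = (T g (T h x) : V)
      rw [hT, hT, mul_smul]
    have hT_one : T 1 = 1 := by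
      ext x
      show ((1 : P) • (x:V) : V) = (x : V)
      rw [one_smul]
    have hTinv : ∀ g : P, T g * T g⁻¹ = 1 := by
      intro g; rw [← hT_mul, mul_inv_cancel, hT_one]
    have hTinv' : ∀ g : P, T g⁻¹ * T g = 1 := by
      intro g; rw [← hT_mul, inv_mul_cancel, hT_one]
    set U : P →* (Module.End F ↥W)ˣ :=
      { toFun := fun g => ⟨T g, T g⁻¹, hTinv g, hTinv' g⟩
        map_one' := Units.ext hT_one
        map_mul' := fun g h => Units.ext (hT_mul g h) } with hUdef
    have hUval : ∀ g : P, ((U g : (Module.End F ↥W)ˣ) : Module.End F ↥W) = T g := fun _ => rfl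
    set Q := U.range with hQdef
    have hQp : IsPGroup p Q := hP.of_surjective U.rangeRestrict U.rangeRestrict_surjective
    haveI hQfin : Finite Q := Finite.of_surjective _ U.rangeRestrict_surjective
    have hQnt : Nontrivial Q := by
      by_contra hq
      rw [not_nontrivial_iff_subsingleton] at hq
      obtain ⟨w, hwW, hw0⟩ := Submodule.exists_mem_ne_zero_of_ne_bot hbot
      refine hw0 (hfix w fun g => ?_)
      have h1 : U.rangeRestrict g = (1 : Q) := Subsingleton.elim _ _
      have h2 : U g = 1 := by
        have := congrArg (Subgroup.subtype Q) h1
        simpa using this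
      have h3 : T g = 1 := by
        rw [← hUval, h2, Units.val_one]
      have := congrArg (fun f : Module.End F ↥W => ((f ⟨w, hwW⟩ : ↥W) : V)) h3
      simpa [hT] using this
    -- central element of order p
    haveI := hQnt
    have hcnt : Nontrivial (Subgroup.center Q) := hQp.center_nontrivial
    haveI := Fintype.ofFinite (Subgroup.center Q)
    have hcp : IsPGroup p (Subgroup.center Q) := hQp.to_subgroup _
    have hdvd : p ∣ Fintype.card (Subgroup.center Q) := by
      obtain ⟨m, hm⟩ := (IsPGroup.iff_card).1 hcp
      rw [Nat.card_eq_fintype_card] at hm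
      rw [hm]
      refine dvd_pow_self _ ?_
      rintro rfl
      rw [pow_zero] at hm
      exact (Fintype.one_lt_card).ne' hm
    obtain ⟨z1, hz1⟩ := exists_prime_orderOf_dvd_card p hdvd
    set zQ : Q := (z1 : Q) with hzQ
    set e : Module.End F ↥W := (((zQ : (Module.End F ↥W)ˣ)) : Module.End F ↥W) with hedef
    have he_p : e ^ p = 1 := by
      have h1 : z1 ^ p = 1 := by rw [← hz1]; exact pow_orderOf_eq_one z1
      have h2 : zQ ^ p = 1 := by
        have := congrArg (Subgroup.subtype _) h1
        simpa [hzQ] using this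
      have h3 : (zQ : (Module.End F ↥W)ˣ) ^ p = 1 := by
        have := congrArg (Subgroup.subtype _) h2
        simpa using this
      calc e ^ p = (((zQ : (Module.End F ↥W)ˣ) ^ p : (Module.End F ↥W)ˣ) : Module.End F ↥W) := by
            rw [Units.val_pow_eq_pow_val]
        _ = 1 := by rw [h3, Units.val_one]
    have he_ne : e ≠ 1 := by
      intro h
      have h1 : (zQ : (Module.End F ↥W)ˣ) = 1 := Units.ext h
      have h2 : zQ = 1 := by
        apply Subtype.ext; simpa using h1
      have h3 : z1 = 1 := by
        apply Subtype.ext; simpa [hzQ] using h2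
      rw [h3, orderOf_one] at hz1
      exact hp.one_lt.ne hz1
    have hcent : ∀ g : P, Commute e (T g) := by
      intro g
      have hm : (⟨U g, ⟨g, rfl⟩⟩ : Q) * zQ = zQ * (⟨U g, ⟨g, rfl⟩⟩ : Q) :=
        Subgroup.mem_center_iff.1 z1.2 _
      have := congrArg (fun q : Q => ((q : (Module.End F ↥W)ˣ) : Module.End F ↥W)) hm
      show e * T g = T g * e
      rw [hedef]
      simpa [hUval] using this.symm
    -- eigenprojections
    set π : ℕ → Module.End F ↥W :=
      fun i => (p : F)⁻¹ • ∑ j ∈ range p, ((κ ^ i)⁻¹) ^ j • e ^ j with hπdef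
    have hπeig : ∀ i : ℕ, e * π i = κ ^ i • π i := by
      intro i
      have hκi : κ ^ i ≠ 0 := pow_ne_zero _ hκ0
      set x : F := (κ ^ i)⁻¹ with hx
      have hxp : x ^ p = 1 := by
        rw [hx, inv_pow, ← pow_mul, mul_comm i p, pow_mul, hκp, one_pow, inv_one]
      set S : Module.End F ↥W := ∑ j ∈ range p, x ^ j • e ^ j with hS
      have hshift : ∑ j ∈ range p, x ^ (j + 1) • e ^ (j + 1) = S := by
        have h1 := Finset.sum_range_succ' (fun j => x ^ j • e ^ j) p
        have h2 := Finset.sum_range_succ (fun j => x ^ j • e ^ j) p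
        have h3 : x ^ p • e ^ p = x ^ 0 • e ^ 0 := by
          rw [hxp, he_p, pow_zero, pow_zero]
        rw [h2, h3] at h1
        rw [add_left_inj] at h1
        exact h1.symm
      have hmul : e * S = κ ^ i • S := by
        rw [hS, Finset.mul_sum]
        have hterm : ∀ j, e * (x ^ j • e ^ j) = κ ^ i • (x ^ (j + 1) • e ^ (j + 1)) := by
          intro j
          rw [mul_smul_comm, smul_smul, ← pow_succ']
          congr 1
          rw [hx, pow_succ, ← mul_assoc, mul_comm (κ ^ i), mul_assoc,
            mul_inv_cancel₀ hκi, mul_one]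
        calc ∑ j ∈ range p, e * (x ^ j • e ^ j)
            = ∑ j ∈ range p, κ ^ i • (x ^ (j + 1) • e ^ (j + 1)) := by
              exact Finset.sum_congr rfl (fun j _ => hterm j)
          _ = κ ^ i • ∑ j ∈ range p, x ^ (j + 1) • e ^ (j + 1) := by rw [Finset.smul_sum]
          _ = κ ^ i • S := by rw [hshift]
      rw [hπdef]
      simp only [mul_smul_comm]
      rw [← hS, hmul, smul_comm]
    have hπsum : ∑ i ∈ range p, π i = 1 := by
      have hswap : ∑ i ∈ range p, ∑ j ∈ range p, ((κ ^ i)⁻¹) ^ j • e ^ j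
          = ∑ j ∈ range p, (∑ i ∈ range p, ((κ⁻¹) ^ j) ^ i) • e ^ j := by
        rw [Finset.sum_comm]
        refine Finset.sum_congr rfl (fun j _ => ?_)
        rw [Finset.sum_smul]
        refine Finset.sum_congr rfl (fun i _ => ?_)
        congr 1
        rw [inv_pow, ← pow_mul, ← pow_mul, mul_comm i j, inv_pow]
      have hinner : ∀ j ∈ range p, (∑ i ∈ range p, ((κ⁻¹) ^ j) ^ i) • (e ^ j : Module.End F ↥W)
          = (if j = 0 then (p : F) • (1 : Module.End F ↥W) else 0) := by
        intro j hj
        rcases eq_or_ne j 0 with rfl | hj0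
        · simp
        · have hy1 : (κ⁻¹) ^ j ≠ 1 := by
            rw [inv_pow, Ne, inv_eq_one]
            exact hκj j (Nat.not_dvd_of_pos_of_lt (Nat.pos_of_ne_zero hj0) (mem_range.1 hj))
          have hyp : ((κ⁻¹) ^ j) ^ p = 1 := by
            rw [← pow_mul, mul_comm j p, pow_mul, inv_pow, hκp, inv_one, one_pow]
          rw [hgeom _ hyp hy1, zero_smul]
          simp [hj0]
      have : ∑ i ∈ range p, π i
          = (p : F)⁻¹ • ∑ j ∈ range p, (∑ i ∈ range p, ((κ⁻¹) ^ j) ^ i) • e ^ j := by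
        rw [hπdef, ← Finset.smul_sum, hswap]
      rw [this, Finset.sum_congr rfl hinner, Finset.sum_ite_eq' (range p) 0]
      simp only [Finset.mem_range, hp.pos, if_true]
      rw [smul_smul, inv_mul_cancel₀ hpF, one_smul]
    have hπcomm : ∀ (g : P) (i : ℕ), Commute (T g) (π i) := by
      intro g i
      rw [hπdef]
      refine Commute.smul_right ?_ _
      refine Commute.sum_right _ _ _ (fun j _ => ?_)
      refine Commute.smul_right ?_ _
      exact (Commute.pow_right (hcent g).symm j)
    -- choose a vector of minimal stabilizer index
    have hne : Nonempty {w : V // w ∈ W ∧ w ≠ 0} := by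
      obtain ⟨w, hwW, hw0⟩ := Submodule.exists_mem_ne_zero_of_ne_bot hbot
      exact ⟨⟨w, hwW, hw0⟩⟩
    obtain ⟨vm, hvm⟩ := Finite.exists_min
      (fun w : {w : V // w ∈ W ∧ w ≠ 0} => (MulAction.stabilizer P w.val).index)
    set wm : ↥W := ⟨vm.val, vm.prop.1⟩ with hwm
    have hidxpos : ∀ w : V, 0 < (MulAction.stabilizer P w).index :=
      fun w => Nat.pos_of_ne_zero Subgroup.index_ne_zero_of_finite
    have hker : ∀ x : ↥W, x ∈ LinearMap.ker (e - 1) ↔ e x = x := by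
      intro x
      rw [LinearMap.mem_ker, LinearMap.sub_apply, Module.End.one_apply, sub_eq_zero]
    by_cases hA : ∀ i ∈ range p, i ≠ 0 → π i wm = 0
    · -- Case B : wm is fixed by e; recurse into the fixed submodule
      have hwsum : π 0 wm = wm := by
        have h1 : (∑ i ∈ range p, π i) wm = wm := by rw [hπsum]; rfl
        rw [LinearMap.sum_apply] at h1
        have h2 : ∑ i ∈ range p, π i wm = π 0 wm :=
          Finset.sum_eq_single 0 (fun i hi hi0 => hA i hi hi0)
            (fun h => absurd (mem_range.2 hp.pos) h)
        rw [← h2]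
        exact h1
      have hew : e wm = wm := by
        have h3 := congrArg (fun f : Module.End F ↥W => f wm) (hπeig 0)
        simp only [Module.End.mul_apply, pow_zero, one_smul] at h3
        rwa [hwsum] at h3
      set W' : Submodule F V := Submodule.map W.subtype (LinearMap.ker (e - 1)) with hW'
      have hW'le : W' ≤ W := Submodule.map_subtype_le _ _
      have hvmW' : vm.val ∈ W' := ⟨wm, (hker wm).2 hew, rfl⟩
      have hW'bot : W' ≠ ⊥ := by
        intro h
        rw [h, Submodule.mem_bot] at hvmW'
        exact vm.prop.2 hvmW'
      have hW'inv : ∀ g : P, ∀ w ∈ W', g • w ∈ W' := by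
        rintro g w ⟨x, hx, rfl⟩
        refine ⟨T g x, ?_, (hT g x)⟩
        simp only [SetLike.mem_coe] at hx ⊢
        rw [hker] at hx ⊢
        have hc := congrArg (fun f : Module.End F ↥W => f x) (hcent g).eq
        simp only [Module.End.mul_apply] at hc
        rw [hc, hx]
      have hlt : Nat.card ↥W' < Nat.card ↥W := by
        have hne' : W' ≠ W := by
          intro hEq
          apply he_ne
          ext x
          have hx : x.val ∈ W' := by rw [hEq]; exact x.prop
          obtain ⟨y, hy, hyx⟩ := hx
          have hyx' : y = x := Subtype.ext hyx
          rw [hyx'] at hy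
          simp only [SetLike.mem_coe] at hy
          rw [hker] at hy
          rw [hy]
          rfl
        have hssub : (W' : Set V) ⊂ (W : Set V) := by
          rw [SetLike.coe_ssubset_coe]
          exact lt_of_le_of_ne hW'le hne'
        have h4 := Set.ncard_lt_ncard hssub (Set.toFinite _)
        rw [← Nat.card_coe_set_eq, ← Nat.card_coe_set_eq] at h4
        exact h4
      obtain ⟨g, v, hvW', hv0, hgv, hmin'⟩ := ih W' (by omega) hW'inv hW'bot
      exact ⟨g, v, hW'le hvW', hv0, hgv, fun w hw hw0 =>
        le_trans (hmin' vm.val hvmW' vm.prop.2) (hvm ⟨w, hw, hw0⟩)⟩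
    · -- Case A : some nonzero eigencomponent with nontrivial eigenvalue
      push_neg at hA
      obtain ⟨i, hip, hi0, hπi⟩ := hA
      set u' : ↥W := π i wm with hu'
      have hu0 : (u' : V) ≠ 0 := fun h => hπi (ZeroMemClass.coe_eq_zero.1 h)
      have hstab : MulAction.stabilizer P vm.val ≤ MulAction.stabilizer P (u' : V) := by
        intro g hg
        rw [MulAction.mem_stabilizer_iff] at hg ⊢
        have h1 : T g wm = wm := Subtype.ext (by rw [hT]; exact hg)
        have h2 : T g u' = u' := by
          have hc := congrArg (fun f : Module.End F ↥W => f wm) (hπcomm g i).eq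
          simp only [Module.End.mul_apply] at hc
          rw [hu', hc, h1]
        calc g • (u' : V) = ((T g u' : ↥W) : V) := (hT g u').symm
          _ = (u' : V) := by rw [h2]
      have he_u : e u' = (κ ^ i) • u' := by
        have hc := congrArg (fun f : Module.End F ↥W => f wm) (hπeig i)
        simp only [Module.End.mul_apply, LinearMap.smul_apply] at hc
        rw [hu']
        exact hc
      have he_uj : ∀ j : ℕ, (e ^ j) u' = (κ ^ (i * j)) • u' := by
        intro j
        induction j with
        | zero => simp
        | succ m hm =>
          rw [pow_succ, Module.End.mul_apply, he_u, map_smul, hm, smul_smul, ← pow_add,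
            Nat.mul_succ, Nat.add_comm (i * m) i]
      have hi_lt : i < p := mem_range.1 hip
      have hpi : ¬ p ∣ i := Nat.not_dvd_of_pos_of_lt (Nat.pos_of_ne_zero hi0) hi_lt
      haveI : NeZero p := ⟨hp.ne_zero⟩
      have hibar : ((i : ZMod p)) ≠ 0 := by
        rw [Ne, ZMod.natCast_eq_zero_iff]
        exact hpi
      set j : ℕ := ((i : ZMod p)⁻¹).val with hj
      have hij1 : ((i * j : ℕ) : ZMod p) = 1 := by
        push_cast
        rw [hj, ZMod.natCast_val, ZMod.cast_id, mul_inv_cancel₀ hibar]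
      have hijmod : (i * j) % p = 1 := by
        have h5 := (ZMod.natCast_eq_natCast_iff (i * j) 1 p).1 (by rw [hij1]; simp)
        rwa [Nat.ModEq, Nat.mod_eq_of_lt hp.one_lt] at h5
      have hκij : κ ^ (i * j) = κ := by
        conv_lhs => rw [← Nat.div_add_mod (i * j) p]
        rw [pow_add, pow_mul, hκp, one_pow, one_mul, hijmod, pow_one]
      obtain ⟨gz, hgz⟩ := MonoidHom.mem_range.1 zQ.2
      have hTgzj : T (gz ^ j) = e ^ j := by
        have h6 : T (gz ^ j) = ((U (gz ^ j) : (Module.End F ↥W)ˣ) : Module.End F ↥W) := rfl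
        rw [h6, map_pow, hgz, Units.val_pow_eq_pow_val]
      refine ⟨gz ^ j, (u' : V), u'.prop, hu0, ?_, fun w hw hw0 =>
        le_trans (Nat.le_of_dvd (hidxpos _) (Subgroup.index_dvd_of_le hstab))
          (hvm ⟨w, hw, hw0⟩)⟩
      calc κ • (u' : V) = ((κ • u' : ↥W) : V) := rfl
        _ = (((e ^ j) u' : ↥W) : V) := by rw [he_uj j, hκij]
        _ = ((T (gz ^ j)) u' : V) := by rw [hTgzj]
        _ = (gz ^ j) • (u' : V) := hT _ _


/-- If a nontrivial finite `p`-group `P` acts linearly on a finite vector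
space `V` with `C_V(P) = 0`, and `σ` is an additive automorphism of `V` of order `p`
commuting with the `P`-action such that `σ v ∈ ⟨v⟩` for all `v`, then there are `g ∈ P`
and a nonzero `v ∈ V` with `σ v = g • v` and `|P : C_P(v)|` minimal among nonzero vectors. -/
theorem exists_min_index_vector_sigma_eq_conj
    {p : ℕ} (hp : p.Prime) {P : Type*} [Group P] [Finite P] [Nontrivial P]
    (hP : IsPGroup p P)
    {F : Type*} [Field F] [Finite F] {V : Type*} [AddCommGroup V] [Module F V] [Finite V]
    [DistribMulAction P V] [SMulCommClass P F V]
    (hfix : ∀ v : V, (∀ g : P, g • v = v) → v = 0)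
    (σ : V ≃+ V) (hσ : addOrderOf σ = p)
    (hcomm : ∀ (g : P) (v : V), σ (g • v) = g • (σ v))
    (hcyc : ∀ v : V, σ v ∈ AddSubgroup.zmultiples v) :
    ∃ (g : P) (v : V), v ≠ 0 ∧ σ v = g • v ∧
      ∀ w : V, w ≠ 0 →
        (MulAction.stabilizer P v).index ≤ (MulAction.stabilizer P w).index := by
  obtain ⟨κ, hκ⟩ := sigma_is_scalar (F := F) σ hcyc
  have hσ1 : σ ≠ 0 := by
    intro h
    rw [h, addOrderOf_zero] at hσ
    exact hp.one_lt.ne hσ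
  have hv1 : ∃ v : V, σ v ≠ v := by
    by_contra h
    push_neg at h
    exact hσ1 (AddEquiv.ext h)
  obtain ⟨v1, hv1⟩ := hv1
  have hv10 : v1 ≠ 0 := by
    rintro rfl
    exact hv1 (map_zero σ)
  have hκ1 : κ ≠ 1 := by
    rintro rfl
    exact hv1 (by rw [hκ v1, one_smul])
  have hpow : ∀ (m : ℕ) (v : V), (m • σ) v = κ ^ m • v := by
    intro m
    induction m with
    | zero => intro v; rw [zero_nsmul, pow_zero, one_smul]; rfl
    | succ k hk =>
      intro v
      have h1 : ((k + 1) • σ) v = σ ((k • σ) v) := by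
        rw [succ_nsmul']
        rfl
      rw [h1, hk v, hκ (κ ^ k • v), smul_smul, ← pow_succ']
  have hκp : κ ^ p = 1 := by
    have h1 : (p • σ) v1 = v1 := by rw [← hσ, addOrderOf_nsmul_eq_zero]; rfl
    rw [hpow p v1] at h1
    have h2 : (κ ^ p - 1) • v1 = 0 := by rw [sub_smul, one_smul, h1, sub_self]
    rcases smul_eq_zero.1 h2 with h | h
    · exact sub_eq_zero.1 h
    · exact absurd h hv10
  have htop : (⊤ : Submodule F V) ≠ ⊥ := by
    intro h
    have h2 : v1 ∈ (⊥ : Submodule F V) := h ▸ Submodule.mem_top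
    exact hv10 ((Submodule.mem_bot F).1 h2)
  obtain ⟨g, v, hvW, hv0, hgv, hmin⟩ := core_induction hp hP hfix κ hκp hκ1
    (Nat.card ↥(⊤ : Submodule F V)) ⊤ le_rfl (fun g w _ => Submodule.mem_top) htop
  exact ⟨g, v, hv0, by rw [hκ v, hgv], fun w hw => hmin w Submodule.mem_top hw⟩
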